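/- For ADAPD iterates with initialization consistency, if η < 1/(2L), then for all k ≥ 0: η‖Y^{k+1}−Y^k‖_F² ≤ 4L²η‖X^{k+1}−X^k‖_F² + (4/η)‖V0^k‖_F² + 8η ε_k, and η(1−ρ)‖Z^{k+1}−Z^k‖_F² ≤ 8L²η‖X^{k+1}−X^k‖_F² + (10/η)‖V0^k‖_F² + 16η ε_k. -/

import Mathlib

open Matrix Finset

attribute [local instance] Matrix.frobeniusNormedAddCommGroup Matrix.frobeniusNormedSpace

noncomputable section

variable {N p : ℕ}

/-- Frobenius inner product on `N × p` real matrices. -/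
def frobInner (A B : Matrix (Fin N) (Fin p) ℝ) : ℝ := ∑ i, ∑ j, A i j * B i j

/-- Squared Frobenius norm. -/
def frobSq (A : Matrix (Fin N) (Fin p) ℝ) : ℝ := frobInner A A

/-- Frobenius norm. -/
def frobNorm (A : Matrix (Fin N) (Fin p) ℝ) : ℝ := Real.sqrt (frobInner A A)

/-- The continuous linear functional `H ↦ ⟨G, H⟩_F`. -/
def frobCLM (G : Matrix (Fin N) (Fin p) ℝ) : Matrix (Fin N) (Fin p) ℝ →L[ℝ] ℝ :=
  LinearMap.toContinuousLinearMap
    { toFun := fun H => frobInner G H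
      map_add' := by
        intro x y
        simp [frobInner, Matrix.add_apply, mul_add, Finset.sum_add_distrib]
      map_smul' := by
        intro c x
        simp [frobInner, Matrix.smul_apply, Finset.mul_sum]
        ring_nf
        apply Finset.sum_congr rfl; intro i _
        apply Finset.sum_congr rfl; intro j _; ring }

/-- Spectral norm (operator 2-norm) of a square real matrix. -/
def specNorm {N : ℕ} (M : Matrix (Fin N) (Fin N) ℝ) : ℝ :=
  ‖Matrix.toEuclideanCLM (𝕜 := ℝ) M‖

/-- The all-ones `N × N` matrix. -/
def onesMat (N : ℕ) : Matrix (Fin N) (Fin N) ℝ := fun _ _ => 1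

/-- Quadratic form `‖A‖_M² := ⟨A, M A⟩_F` for a symmetric `M` (possibly negative). -/
def quadForm (M : Matrix (Fin N) (Fin N) ℝ) (A : Matrix (Fin N) (Fin p) ℝ) : ℝ :=
  frobInner A (M * A)

/-- Augmented Lagrangian `L_η(X, X0; Y, Z)`, where `S` plays the role of `√(I−W)`. -/
def Lag (F : Matrix (Fin N) (Fin p) ℝ → ℝ) (S : Matrix (Fin N) (Fin N) ℝ) (η : ℝ)
    (X X0 Y Z : Matrix (Fin N) (Fin p) ℝ) : ℝ :=
  F X + frobInner Y (X - X0) + (2*η)⁻¹ * frobSq (X - X0)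
    + frobInner Z (S * X0) + (2*η)⁻¹ * frobSq (S * X0)

section Toolkit

/-- Embedding of matrices into Euclidean space. -/
def toE (A : Matrix (Fin N) (Fin p) ℝ) : EuclideanSpace ℝ (Fin N × Fin p) :=
  (WithLp.equiv 2 _).symm (fun q => A q.1 q.2)

lemma frobInner_eq_inner (A B : Matrix (Fin N) (Fin p) ℝ) :
    frobInner A B = inner ℝ (toE A) (toE B) := by
  simp [frobInner, toE, PiLp.inner_apply, Real.inner_apply, Fintype.sum_prod_type, mul_comm]

lemma toE_add (A B : Matrix (Fin N) (Fin p) ℝ) : toE (A + B) = toE A + toE B := rfl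
lemma toE_sub (A B : Matrix (Fin N) (Fin p) ℝ) : toE (A - B) = toE A - toE B := rfl
lemma toE_smul (c : ℝ) (A : Matrix (Fin N) (Fin p) ℝ) : toE (c • A) = c • toE A := rfl

lemma frobNorm_eq (A : Matrix (Fin N) (Fin p) ℝ) : frobNorm A = ‖toE A‖ := by
  rw [frobNorm, frobInner_eq_inner, real_inner_self_eq_norm_sq, Real.sqrt_sq (norm_nonneg _)]

lemma frobSq_eq (A : Matrix (Fin N) (Fin p) ℝ) : frobSq A = ‖toE A‖ ^ 2 := by
  rw [frobSq, frobInner_eq_inner, real_inner_self_eq_norm_sq]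

lemma frobSq_eq_sq (A : Matrix (Fin N) (Fin p) ℝ) : frobSq A = frobNorm A ^ 2 := by
  rw [frobSq_eq, frobNorm_eq]

lemma frobNorm_nonneg (A : Matrix (Fin N) (Fin p) ℝ) : 0 ≤ frobNorm A := by
  rw [frobNorm_eq]; exact norm_nonneg _

lemma frobSq_nonneg (A : Matrix (Fin N) (Fin p) ℝ) : 0 ≤ frobSq A := by
  rw [frobSq_eq]; positivity

lemma frobNorm_add_le (A B : Matrix (Fin N) (Fin p) ℝ) :
    frobNorm (A + B) ≤ frobNorm A + frobNorm B := by
  simp only [frobNorm_eq, toE_add]; exact norm_add_le _ _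

lemma frobNorm_sub_le' (A B : Matrix (Fin N) (Fin p) ℝ) :
    frobNorm (A - B) ≤ frobNorm A + frobNorm B := by
  simp only [frobNorm_eq, toE_sub]; exact norm_sub_le _ _

lemma frobNorm_smul (c : ℝ) (A : Matrix (Fin N) (Fin p) ℝ) :
    frobNorm (c • A) = |c| * frobNorm A := by
  simp only [frobNorm_eq, toE_smul, norm_smul, Real.norm_eq_abs]

lemma frobSq_smul (c : ℝ) (A : Matrix (Fin N) (Fin p) ℝ) :
    frobSq (c • A) = c ^ 2 * frobSq A := by
  simp only [frobSq_eq, toE_smul, norm_smul, Real.norm_eq_abs, mul_pow, sq_abs]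

lemma frobInner_le (A B : Matrix (Fin N) (Fin p) ℝ) :
    frobInner A B ≤ frobNorm A * frobNorm B := by
  rw [frobInner_eq_inner, frobNorm_eq, frobNorm_eq]; exact real_inner_le_norm _ _

lemma frobSq_add_of_orth {A B : Matrix (Fin N) (Fin p) ℝ} (h : frobInner A B = 0) :
    frobSq (A + B) = frobSq A + frobSq B := by
  rw [frobInner_eq_inner] at h
  simp only [frobSq_eq, toE_add]
  rw [norm_add_sq_real, h]; ring

lemma frobSq_sub_le (A B : Matrix (Fin N) (Fin p) ℝ) :
    frobSq (A - B) ≤ 2 * frobSq A + 2 * frobSq B := by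
  have h := frobNorm_sub_le' A B
  have h0 := frobNorm_nonneg A
  have h1 := frobNorm_nonneg B
  have h2 := frobNorm_nonneg (A - B)
  simp only [frobSq_eq_sq]
  nlinarith [sq_nonneg (frobNorm A - frobNorm B)]

lemma frobInner_eq_trace (A B : Matrix (Fin N) (Fin p) ℝ) :
    frobInner A B = Matrix.trace (Aᵀ * B) := by
  simp only [frobInner, Matrix.trace, Matrix.diag, Matrix.mul_apply, Matrix.transpose_apply]
  rw [Finset.sum_comm]

lemma frobInner_mul_left (M : Matrix (Fin N) (Fin N) ℝ) (A B : Matrix (Fin N) (Fin p) ℝ) :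
    frobInner (M * A) B = frobInner A (Mᵀ * B) := by
  rw [frobInner_eq_trace, frobInner_eq_trace, Matrix.transpose_mul, Matrix.mul_assoc]

lemma frobInner_zero_right (A : Matrix (Fin N) (Fin p) ℝ) : frobInner A 0 = 0 := by
  simp [frobInner]

lemma frobInner_sub_right (A B C : Matrix (Fin N) (Fin p) ℝ) :
    frobInner A (B - C) = frobInner A B - frobInner A C := by
  simp [frobInner, Matrix.sub_apply, mul_sub, Finset.sum_sub_distrib]

lemma frobSq_cols (C : Matrix (Fin N) (Fin p) ℝ) :
    frobSq C = ∑ j, ‖(WithLp.equiv 2 (Fin N → ℝ)).symm (fun i => C i j)‖ ^ 2 := by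
  have h : ∀ j, ‖(WithLp.equiv 2 (Fin N → ℝ)).symm (fun i => C i j)‖ ^ 2
      = ∑ i, C i j ^ 2 := by
    intro j
    rw [EuclideanSpace.norm_eq, Real.sq_sqrt (by positivity)]
    simp [Real.norm_eq_abs, sq_abs]
  simp only [h, frobSq, frobInner]
  rw [Finset.sum_comm]
  simp [sq]

lemma frobSq_mul_le (M : Matrix (Fin N) (Fin N) ℝ) (B : Matrix (Fin N) (Fin p) ℝ) :
    frobSq (M * B) ≤ specNorm M ^ 2 * frobSq B := by
  rw [frobSq_cols, frobSq_cols, Finset.mul_sum]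
  refine Finset.sum_le_sum fun j _ => ?_
  have hcol : (fun i => (M * B) i j) = M *ᵥ (fun l => B l j) := by
    funext i; simp [Matrix.mul_apply, Matrix.mulVec, dotProduct]
  rw [hcol, show ((WithLp.equiv 2 (Fin N → ℝ)).symm (M *ᵥ fun l => B l j)) = Matrix.toEuclideanCLM (𝕜 := ℝ) M ((WithLp.equiv 2 (Fin N → ℝ)).symm fun l => B l j) from rfl]
  have h := (Matrix.toEuclideanCLM (𝕜 := ℝ) M).le_opNorm
    ((WithLp.equiv 2 (Fin N → ℝ)).symm (fun l => B l j))
  have h2 := mul_self_le_mul_self (norm_nonneg _) h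
  calc ‖(Matrix.toEuclideanCLM (𝕜 := ℝ) M) ((WithLp.equiv 2 (Fin N → ℝ)).symm fun l => B l j)‖ ^ 2
      ≤ (‖Matrix.toEuclideanCLM (𝕜 := ℝ) M‖ * ‖(WithLp.equiv 2 (Fin N → ℝ)).symm fun l => B l j‖) ^ 2 := by
        rw [sq, sq]; exact h2
    _ = specNorm M ^ 2 * ‖(WithLp.equiv 2 (Fin N → ℝ)).symm fun l => B l j‖ ^ 2 := by
        rw [mul_pow]; rfl

lemma frobNorm_mul_le (M : Matrix (Fin N) (Fin N) ℝ) (B : Matrix (Fin N) (Fin p) ℝ) :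
    frobNorm (M * B) ≤ specNorm M * frobNorm B := by
  have h := frobSq_mul_le M B
  rw [frobSq_eq_sq, frobSq_eq_sq] at h
  have h1 := frobNorm_nonneg (M * B)
  have h2 : 0 ≤ specNorm M * frobNorm B :=
    mul_nonneg (norm_nonneg _) (frobNorm_nonneg _)
  nlinarith

lemma W_contract (hN : 0 < N) (W : Matrix (Fin N) (Fin N) ℝ) (hWsym : Wᵀ = W)
    (hrow : ∀ i, ∑ l, W i l = (1:ℝ)) (ρ : ℝ)
    (hρdef : ρ = specNorm (W - (N:ℝ)⁻¹ • onesMat N)) (hρ0 : 0 ≤ ρ) (hρ1 : ρ ≤ 1)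
    (A : Matrix (Fin N) (Fin p) ℝ) : frobSq (W * A) ≤ frobSq A := by
  have hNne : (N:ℝ) ≠ 0 := Nat.cast_ne_zero.mpr hN.ne'
  set P : Matrix (Fin N) (Fin N) ℝ := (N:ℝ)⁻¹ • onesMat N with hP
  have hcol : ∀ j, ∑ l, W l j = (1:ℝ) := by
    intro j
    calc ∑ l, W l j = ∑ l, W j l := by
          refine Finset.sum_congr rfl fun l _ => ?_
          conv_lhs => rw [← hWsym]
          rfl
      _ = 1 := hrow j
  have hWones : W * onesMat N = onesMat N := by
    ext i j; simp [Matrix.mul_apply, onesMat, hrow i]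
  have honesW : onesMat N * W = onesMat N := by
    ext i j; simp [Matrix.mul_apply, onesMat, hcol j]
  have honesones : onesMat N * onesMat N = (N:ℝ) • onesMat N := by
    ext i j; simp [Matrix.mul_apply, onesMat]
  have hWP : W * P = P := by rw [hP, Matrix.mul_smul, hWones]
  have hPW : P * W = P := by rw [hP, Matrix.smul_mul, honesW]
  have hPP : P * P = P := by
    rw [hP, Matrix.smul_mul, Matrix.mul_smul, honesones, smul_smul, smul_smul]
    congr 1
    field_simp
  have hPsym : Pᵀ = P := by
    rw [hP, Matrix.transpose_smul]
    congr 1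
  have hfac : (W - P) * (1 - P) = W - P := by
    rw [Matrix.mul_sub, Matrix.mul_one, Matrix.sub_mul, hWP, hPP]
    abel
  have hdec : W * A = P * A + (W - P) * ((1 - P) * A) := by
    rw [← Matrix.mul_assoc, hfac, Matrix.sub_mul]
    abel
  have hPWP : P * (W - P) = 0 := by rw [Matrix.mul_sub, hPW, hPP, sub_self]
  have hP1P : P * (1 - P) = 0 := by rw [Matrix.mul_sub, Matrix.mul_one, hPP, sub_self]
  have horth1 : frobInner (P * A) ((W - P) * ((1 - P) * A)) = 0 := by
    rw [frobInner_mul_left, hPsym]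
    have e : P * ((W - P) * ((1 - P) * A)) = (P * (W - P)) * ((1 - P) * A) :=
      (Matrix.mul_assoc _ _ _).symm
    rw [e, hPWP, Matrix.zero_mul, frobInner_zero_right]
  have horth2 : frobInner (P * A) ((1 - P) * A) = 0 := by
    rw [frobInner_mul_left, hPsym]
    have e : P * ((1 - P) * A) = (P * (1 - P)) * A := (Matrix.mul_assoc _ _ _).symm
    rw [e, hP1P, Matrix.zero_mul, frobInner_zero_right]
  have hsplit : frobSq (W * A) = frobSq (P * A) + frobSq ((W - P) * ((1 - P) * A)) := by
    rw [hdec]; exact frobSq_add_of_orth horth1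
  have hA : frobSq A = frobSq (P * A) + frobSq ((1 - P) * A) := by
    have e : A = P * A + (1 - P) * A := by
      rw [Matrix.sub_mul, Matrix.one_mul]; abel
    conv_lhs => rw [e]
    exact frobSq_add_of_orth horth2
  have hbd : frobSq ((W - P) * ((1 - P) * A)) ≤ ρ ^ 2 * frobSq ((1 - P) * A) := by
    rw [hρdef]; exact frobSq_mul_le _ _
  nlinarith [frobSq_nonneg ((1 - P) * A), frobSq_nonneg (P * A), mul_le_mul hρ1 hρ1 hρ0 zero_le_one]

lemma S_coercive (W S : Matrix (Fin N) (Fin N) ℝ)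
    (hSsym : Sᵀ = S) (hSsq : S * S = 1 - W) (ρ : ℝ)
    (hρdef : ρ = specNorm (W - (N:ℝ)⁻¹ • onesMat N))
    (U : Matrix (Fin N) (Fin p) ℝ) (hPU : ((N:ℝ)⁻¹ • onesMat N) * U = 0) :
    (1 - ρ) * frobSq U ≤ frobSq (S * U) := by
  set P : Matrix (Fin N) (Fin N) ℝ := (N:ℝ)⁻¹ • onesMat N with hP
  have h1 : frobSq (S * U) = frobSq U - frobInner U (W * U) := by
    rw [frobSq, frobInner_mul_left, hSsym, ← Matrix.mul_assoc, hSsq, Matrix.sub_mul,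
      Matrix.one_mul, frobInner_sub_right]
    rfl
  have h2 : W * U = (W - P) * U := by rw [Matrix.sub_mul, hPU, sub_zero]
  have h3 : frobInner U (W * U) ≤ ρ * frobSq U := by
    rw [h2]
    calc frobInner U ((W - P) * U) ≤ frobNorm U * frobNorm ((W - P) * U) := frobInner_le _ _
      _ ≤ frobNorm U * (ρ * frobNorm U) := by
          refine mul_le_mul_of_nonneg_left ?_ (frobNorm_nonneg U)
          rw [hρdef]; exact frobNorm_mul_le _ _
      _ = ρ * frobSq U := by rw [frobSq_eq_sq]; ring
  linarith

end Toolkit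


set_option maxHeartbeats 1000000 in
/-- Lemma: dual variable change bounded by primal change.
Here `V0^k = (X0^{k+1} − X0^k) − (X0^k − X0^{k-1})`, with the convention
`X0^{-1} = X0^0` (realized by truncated subtraction `k - 1` on `ℕ`). -/
theorem adapd_dual_var_bound (N p : ℕ) (hN : 0 < N) (hp : 0 < p)
    -- mixing matrix assumptions
    (W : Matrix (Fin N) (Fin N) ℝ) (hWsym : Wᵀ = W)
    (hWub : Matrix.PosSemidef (1 - W)) (hWlb : Matrix.PosDef (1 + W))
    (hWnull : ∀ v : Fin N → ℝ, (1 - W).mulVec v = 0 ↔ ∃ c : ℝ, v = fun _ => c)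
    (ρ : ℝ) (hρdef : ρ = specNorm (W - (N:ℝ)⁻¹ • onesMat N)) (hρlt : ρ < 1)
    -- `S` is the unique positive semidefinite square root of `I − W`
    (S : Matrix (Fin N) (Fin N) ℝ) (hSpsd : S.PosSemidef) (hSsq : S * S = 1 - W)
    -- objective: `F` is `L`-smooth (gradient `G` w.r.t. the Frobenius inner product)
    -- and bounded below by `flb`
    (L flb : ℝ) (hL : 0 < L)
    (F : Matrix (Fin N) (Fin p) ℝ → ℝ)
    (G : Matrix (Fin N) (Fin p) ℝ → Matrix (Fin N) (Fin p) ℝ)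
    (hgrad : ∀ U, HasFDerivAt F (frobCLM (G U)) U)
    (hLip : ∀ U V, frobNorm (G U - G V) ≤ L * frobNorm (U - V))
    (hlb : ∀ U, flb ≤ F U)
    -- ADAPD iterates with parameter `η` and error tolerances `ε`
    (η : ℝ) (hη : 0 < η)
    (ε : ℕ → ℝ) (hεpos : ∀ k, 0 < ε (k+1)) (hεmono : ∀ k, ε (k+2) ≤ ε (k+1))
    (X X0 Y Z : ℕ → Matrix (Fin N) (Fin p) ℝ)
    (hZ0 : ∃ U0 : Matrix (Fin N) (Fin p) ℝ, Z 0 = S * U0)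
    (hres : ∀ k, frobSq (G (X (k+1)) + Y k + η⁻¹ • (X (k+1) - X0 k)) ≤ ε (k+1))
    (hX0it : ∀ k, X0 (k+1) = (2:ℝ)⁻¹ • (W * X0 k + X (k+1) + η • (Y k - S * Z k)))
    (hYit : ∀ k, Y (k+1) = Y k + η⁻¹ • (X (k+1) - X0 (k+1)))
    (hZit : ∀ k, Z (k+1) = Z k + η⁻¹ • (S * X0 (k+1)))
    -- initialization consistency (with `ε 0 := ε 1`)
    (hε0 : ε 0 = ε 1)
    (hZY0 : S * Z 0 = Y 0)
    (hY0R : ∃ R0 : Matrix (Fin N) (Fin p) ℝ, Y 0 = R0 - G (X 0) ∧ frobSq R0 ≤ ε 0)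
    (hη2 : η < 1/(2*L)) :
    ∀ k : ℕ,
      η * frobSq (Y (k+1) - Y k)
        ≤ 4*L^2*η * frobSq (X (k+1) - X k)
          + 4/η * frobSq ((X0 (k+1) - X0 k) - (X0 k - X0 (k-1)))
          + 8*η * ε k ∧
      η*(1-ρ) * frobSq (Z (k+1) - Z k)
        ≤ 8*L^2*η * frobSq (X (k+1) - X k)
          + 10/η * frobSq ((X0 (k+1) - X0 k) - (X0 k - X0 (k-1)))
          + 16*η * ε k := by
  intro k
  have hηne : η ≠ 0 := ne_of_gt hη
  have hinv : (0:ℝ) < η⁻¹ := inv_pos.mpr hη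
  obtain ⟨R0, hYR0, hR0sq⟩ := hY0R
  obtain ⟨Rf, hRf0, hRfS⟩ : ∃ Rf : ℕ → Matrix (Fin N) (Fin p) ℝ, Rf 0 = R0 ∧
      ∀ m, Rf (m+1) = G (X (m+1)) + Y m + η⁻¹ • (X (m+1) - X0 m) :=
    ⟨fun n => Nat.casesOn n R0 (fun m => G (X (m+1)) + Y m + η⁻¹ • (X (m+1) - X0 m)),
      rfl, fun m => rfl⟩
  have hRsq : ∀ n, frobSq (Rf n) ≤ ε n := by
    intro n
    cases n with
    | zero => rw [hRf0]; exact hR0sq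
    | succ m => rw [hRfS m]; exact hres m
  have hεle : ∀ n, ε (n+1) ≤ ε n := by
    intro n
    cases n with
    | zero => rw [hε0]
    | succ m => exact hεmono m
  have hYR : ∀ n, Y n = Rf n - G (X n) - η⁻¹ • (X0 n - X0 (n-1)) := by
    intro n
    cases n with
    | zero =>
        simp only [Nat.zero_sub, sub_self, smul_zero, sub_zero, hRf0]
        exact hYR0
    | succ m =>
        rw [hYit m, hRfS m, Nat.add_sub_cancel]
        module
  set V0 := (X0 (k+1) - X0 k) - (X0 k - X0 (k-1)) with hV0
  have hdY : Y (k+1) - Y k = (Rf (k+1) - Rf k) - (G (X (k+1)) - G (X k)) - η⁻¹ • V0 := by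
    rw [hYR (k+1), hYR k, Nat.add_sub_cancel, hV0]
    module
  have hGb := hLip (X (k+1)) (X k)
  have htr : frobNorm (Y (k+1) - Y k)
      ≤ frobNorm (Rf (k+1)) + frobNorm (Rf k) + frobNorm (G (X (k+1)) - G (X k))
        + η⁻¹ * frobNorm V0 := by
    rw [hdY]
    have t1 := frobNorm_sub_le' ((Rf (k+1) - Rf k) - (G (X (k+1)) - G (X k))) (η⁻¹ • V0)
    have t2 := frobNorm_sub_le' (Rf (k+1) - Rf k) (G (X (k+1)) - G (X k))
    have t3 := frobNorm_sub_le' (Rf (k+1)) (Rf k)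
    have t4 : frobNorm (η⁻¹ • V0) = η⁻¹ * frobNorm V0 := by
      rw [frobNorm_smul, abs_of_pos hinv]
    linarith
  have ha2 : frobNorm (Rf (k+1)) ^ 2 ≤ ε k := by
    rw [← frobSq_eq_sq]; exact (hRsq (k+1)).trans (hεle k)
  have hb2 : frobNorm (Rf k) ^ 2 ≤ ε k := by rw [← frobSq_eq_sq]; exact hRsq k
  have hy0 := frobNorm_nonneg (Y (k+1) - Y k)
  have hd0 := frobNorm_nonneg V0
  have ha0 := frobNorm_nonneg (Rf (k+1))
  have hb0 := frobNorm_nonneg (Rf k)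
  have hc0 := frobNorm_nonneg (G (X (k+1)) - G (X k))
  have hx0 := frobNorm_nonneg (X (k+1) - X k)
  have hc2 : frobNorm (G (X (k+1)) - G (X k)) ^ 2 ≤ L^2 * frobNorm (X (k+1) - X k) ^ 2 := by
    nlinarith [mul_nonneg hL.le hx0]
  have he0 : (0:ℝ) ≤ η⁻¹ * frobNorm V0 := mul_nonneg hinv.le hd0
  set a := frobNorm (Rf (k+1)) with ha
  set b := frobNorm (Rf k) with hb
  set c := frobNorm (G (X (k+1)) - G (X k)) with hc
  set d := frobNorm V0 with hd
  set x := frobNorm (X (k+1) - X k) with hx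
  set y := frobNorm (Y (k+1) - Y k) with hy
  have hsum : frobNorm (Y (k+1) - Y k) ^ 2
      ≤ 4 * (L^2 * frobNorm (X (k+1) - X k) ^ 2) + 4 * (η⁻¹ * frobNorm V0)^2 + 8 * ε k := by
    nlinarith [mul_self_le_mul_self hy0 htr, sq_nonneg (a - b), sq_nonneg (a - c),
      sq_nonneg (a - η⁻¹ * d), sq_nonneg (b - c), sq_nonneg (b - η⁻¹ * d),
      sq_nonneg (c - η⁻¹ * d)]
  have key1 : η * frobSq (Y (k+1) - Y k)
      ≤ 4*L^2*η * frobSq (X (k+1) - X k) + 4/η * frobSq V0 + 8*η * ε k := by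
    rw [frobSq_eq_sq, frobSq_eq_sq, frobSq_eq_sq]
    have h := mul_le_mul_of_nonneg_left hsum hη.le
    calc η * frobNorm (Y (k+1) - Y k) ^ 2
        ≤ η * (4 * (L^2 * frobNorm (X (k+1) - X k) ^ 2) + 4 * (η⁻¹ * frobNorm V0)^2 + 8 * ε k) := h
      _ = 4*L^2*η * frobNorm (X (k+1) - X k) ^ 2 + 4/η * frobNorm V0 ^ 2 + 8*η * ε k := by
          field_simp
  -- symmetry of S
  have hST : Sᵀ = S := by
    ext i j
    have h := congrFun (congrFun hSpsd.1 i) j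
    simpa using h
  -- row sums of W are 1
  have h0 : (1 - W) *ᵥ (fun _ => (1:ℝ)) = 0 := (hWnull _).mpr ⟨1, rfl⟩
  have hWe : ∀ i, ∑ l, W i l = (1:ℝ) := by
    intro i
    have h1 := congrFun h0 i
    simp only [Matrix.mulVec, dotProduct, Pi.zero_apply, mul_one, Matrix.sub_apply,
      Matrix.one_apply, Finset.sum_sub_distrib, Finset.sum_ite_eq, Finset.mem_univ,
      if_true] at h1
    linarith
  have hWv : W *ᵥ (fun _ => (1:ℝ)) = fun _ => 1 := by
    funext i
    simp [Matrix.mulVec, dotProduct, hWe i]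
  have hSSv : S *ᵥ (S *ᵥ (fun _ => (1:ℝ))) = 0 := by
    rw [Matrix.mulVec_mulVec, hSsq, Matrix.sub_mulVec, Matrix.one_mulVec, hWv, sub_self]
  have hdot : (S *ᵥ (fun _ => (1:ℝ))) ⬝ᵥ (S *ᵥ (fun _ => (1:ℝ))) = 0 := by
    rw [dotProduct_mulVec, ← Matrix.mulVec_transpose, hST, hSSv, zero_dotProduct]
  have hSv : S *ᵥ (fun _ => (1:ℝ)) = 0 := by
    simp only [dotProduct] at hdot
    funext i
    have h2 := (Finset.sum_eq_zero_iff_of_nonneg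
      (fun l _ => mul_self_nonneg ((S *ᵥ (fun _ => (1:ℝ))) l))).mp hdot i (Finset.mem_univ i)
    exact mul_self_eq_zero.mp h2
  have hSrow : ∀ i, ∑ l, S i l = (0:ℝ) := by
    intro i
    have h2 := congrFun hSv i
    simpa [Matrix.mulVec, dotProduct] using h2
  have hSe : ∀ j, ∑ l, S l j = (0:ℝ) := by
    intro j
    calc ∑ l, S l j = ∑ l, S j l := by
          refine Finset.sum_congr rfl fun l _ => ?_
          conv_lhs => rw [← hST]
          rfl
      _ = 0 := hSrow j
  have hPS : ((N:ℝ)⁻¹ • onesMat N) * S = 0 := by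
    ext i j
    simp [Matrix.mul_apply, onesMat, Matrix.smul_apply, ← Finset.mul_sum, hSe j]
  -- key identity for S * Z n
  have hη1 : ∀ A : Matrix (Fin N) (Fin p) ℝ, η • (η⁻¹ • A) = A := by
    intro A; rw [smul_smul, mul_inv_cancel₀ hηne, one_smul]
  have hSZ : ∀ n, S * Z n = Y n - η⁻¹ • (W * (X0 n - X0 (n-1))) := by
    intro n
    cases n with
    | zero =>
        simp only [Nat.zero_sub, sub_self, Matrix.mul_zero, smul_zero, sub_zero]
        exact hZY0
    | succ m =>
        rw [Nat.add_sub_cancel]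
        have hXe : X (m+1) = X0 (m+1) + η • Y (m+1) - η • Y m := by
          have h := congrArg (fun M => η • M) (hYit m)
          simp only [smul_add, hη1] at h
          -- h : η • Y (m+1) = η • Y m + (X (m+1) - X0 (m+1))
          conv_rhs => rw [h]
          module
        have h2 : (2:ℝ) • X0 (m+1) = W * X0 m + X (m+1) + η • (Y m - S * Z m) := by
          rw [hX0it m, smul_smul]
          norm_num
        have e1 : X0 (m+1) = W * X0 m + η • Y (m+1) - η • (S * Z m) := by
          have h3 : X0 (m+1) = (2:ℝ) • X0 (m+1) - X0 (m+1) := by module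
          rw [h3, h2, hXe]
          module
        have e2 : η • (S * Z m) = W * X0 m + η • Y (m+1) - X0 (m+1) := by
          rw [e1]; module
        have hmain : η • (S * Z (m+1)) = η • Y (m+1) - (W * X0 (m+1) - W * X0 m) := by
          rw [hZit m, Matrix.mul_add, Matrix.mul_smul, ← Matrix.mul_assoc, hSsq,
            Matrix.sub_mul, Matrix.one_mul, smul_add, hη1 (X0 (m+1) - W * X0 (m+1)), e2]
          module
        have hgoal : η • (Y (m+1) - η⁻¹ • (W * (X0 (m+1) - X0 m)))
            = η • Y (m+1) - (W * X0 (m+1) - W * X0 m) := by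
          rw [smul_sub, hη1 (W * (X0 (m+1) - X0 m)), Matrix.mul_sub]
        exact smul_right_injective _ hηne (hmain.trans hgoal.symm)
  have hSdZ : S * (Z (k+1) - Z k) = (Y (k+1) - Y k) - η⁻¹ • (W * V0) := by
    rw [Matrix.mul_sub, hSZ (k+1), hSZ k, Nat.add_sub_cancel, hV0]
    simp only [Matrix.mul_sub]
    module
  have hUz : Z (k+1) - Z k = η⁻¹ • (S * X0 (k+1)) := by
    rw [hZit k]; exact add_sub_cancel_left _ _
  have hPU : ((N:ℝ)⁻¹ • onesMat N) * (Z (k+1) - Z k) = 0 := by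
    rw [hUz, Matrix.mul_smul, ← Matrix.mul_assoc, hPS, Matrix.zero_mul, smul_zero]
  have hcoer := S_coercive W S hST hSsq ρ hρdef (Z (k+1) - Z k) hPU
  have hρ0 : 0 ≤ ρ := by rw [hρdef]; exact norm_nonneg _
  have hWV : frobSq (W * V0) ≤ frobSq V0 := W_contract hN W hWsym hWe ρ hρdef hρ0 hρlt.le V0
  have hsp : frobSq (S * (Z (k+1) - Z k))
      ≤ 2 * frobSq (Y (k+1) - Y k) + 2 * ((η⁻¹)^2 * frobSq (W * V0)) := by
    rw [hSdZ]
    have h := frobSq_sub_le (Y (k+1) - Y k) (η⁻¹ • (W * V0))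
    rw [frobSq_smul] at h
    linarith
  have h5 : (1 - ρ) * frobSq (Z (k+1) - Z k)
      ≤ 2 * frobSq (Y (k+1) - Y k) + 2 * (η⁻¹)^2 * frobSq V0 := by
    have hh : (η⁻¹)^2 * frobSq (W * V0) ≤ (η⁻¹)^2 * frobSq V0 :=
      mul_le_mul_of_nonneg_left hWV (sq_nonneg _)
    linarith
  have h6 := mul_le_mul_of_nonneg_left h5 hη.le
  have h7 : η * (2 * frobSq (Y (k+1) - Y k) + 2 * (η⁻¹)^2 * frobSq V0)
      = 2 * (η * frobSq (Y (k+1) - Y k)) + 2/η * frobSq V0 := by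
    field_simp
  refine ⟨key1, ?_⟩
  calc η*(1-ρ) * frobSq (Z (k+1) - Z k) = η * ((1-ρ) * frobSq (Z (k+1) - Z k)) := by ring
    _ ≤ 2 * (η * frobSq (Y (k+1) - Y k)) + 2/η * frobSq V0 := by rw [← h7]; exact h6
    _ ≤ 2 * (4*L^2*η * frobSq (X (k+1) - X k) + 4/η * frobSq V0 + 8*η * ε k) + 2/η * frobSq V0 := by
        linarith
    _ = 8*L^2*η * frobSq (X (k+1) - X k) + 10/η * frobSq V0 + 16*η * ε k := by ring

end
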